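/- For every integer r and all 2-forms λ, α ∈ Λ²V*, the pushforward identity p₂!( m_r*(λ) ∧ m*(λ) ∧ p₁*(α) ) = (r−1)²·(∫_A αλ)·λ + r·(∫_A λ²)·α holds in Λ²V*. (This is the Lemma of Section 4 of the paper, computing the pushforward p_{2!}(m_r*λ · m*λ · p₁*α) on A×A.) -/

import Mathlib

/-!
Model: `V4 = Fin 4 → ℝ` plays the role of `V*` (so `Λ•V* = ExteriorAlgebra ℝ V4`),
with basis `f 0, …, f 3` (the `fⱼ*`), point class `ωA = f₁*∧f₂*∧f₃*∧f₄*`.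
`Λ•(V₁* ⊕ V₂*) = ExteriorAlgebra ℝ (V4 × V4)`, with `pull₁, pull₂` the algebra maps
induced by the two inclusions, and `mPull r` the algebra map induced by `ξ ↦ (ξ, r·ξ)`
(pullback under `m_r : A×A → A`).  The pushforward `p₂!` and the integration
functional `∫_A` are taken to be any linear maps satisfying their defining properties.
-/

noncomputable section

open ExteriorAlgebra

abbrev V4 : Type := Fin 4 → ℝ

def f (i : Fin 4) : V4 := Pi.single i 1

/-- the point class `ω = f₁*∧f₂*∧f₃*∧f₄*` -/
def ωA : ExteriorAlgebra ℝ V4 :=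
  ι ℝ (f 0) * ι ℝ (f 1) * ι ℝ (f 2) * ι ℝ (f 3)

/-- pullback `p₁*` under the first projection -/
def pull₁ : ExteriorAlgebra ℝ V4 →ₐ[ℝ] ExteriorAlgebra ℝ (V4 × V4) :=
  ExteriorAlgebra.map (LinearMap.inl ℝ V4 V4)

/-- pullback `p₂*` under the second projection -/
def pull₂ : ExteriorAlgebra ℝ V4 →ₐ[ℝ] ExteriorAlgebra ℝ (V4 × V4) :=
  ExteriorAlgebra.map (LinearMap.inr ℝ V4 V4)

/-- pullback `m_r*` under `m_r : A×A → A, (a,b) ↦ a + r·b`, induced by `ξ ↦ (ξ, r·ξ)` -/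
def mPull (r : ℤ) : ExteriorAlgebra ℝ V4 →ₐ[ℝ] ExteriorAlgebra ℝ (V4 × V4) :=
  ExteriorAlgebra.map (LinearMap.inl ℝ V4 V4 + (r : ℝ) • LinearMap.inr ℝ V4 V4)


lemma ianti {M : Type*} [AddCommGroup M] [Module ℝ M] (x y : M) :
    ι ℝ x * ι ℝ y = -(ι ℝ y * ι ℝ x) :=
  eq_neg_of_add_eq_zero_left (ExteriorAlgebra.ι_add_mul_swap x y)

lemma icons {M : Type*} [AddCommGroup M] [Module ℝ M] (x y : M) (Z : ExteriorAlgebra ℝ M) :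
    ι ℝ x * (ι ℝ y * Z) = -(ι ℝ y * (ι ℝ x * Z)) := by
  rw [← mul_assoc, ianti, neg_mul, mul_assoc]

lemma isq {M : Type*} [AddCommGroup M] [Module ℝ M] (x : M) (Z : ExteriorAlgebra ℝ M) :
    ι ℝ x * (ι ℝ x * Z) = 0 := by
  rw [← mul_assoc, ι_sq_zero, zero_mul]

lemma s10 : ι ℝ (f 1) * ι ℝ (f 0) = -(ι ℝ (f 0) * ι ℝ (f 1)) := ianti _ _
lemma s20 : ι ℝ (f 2) * ι ℝ (f 0) = -(ι ℝ (f 0) * ι ℝ (f 2)) := ianti _ _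
lemma s21 : ι ℝ (f 2) * ι ℝ (f 1) = -(ι ℝ (f 1) * ι ℝ (f 2)) := ianti _ _
lemma s30 : ι ℝ (f 3) * ι ℝ (f 0) = -(ι ℝ (f 0) * ι ℝ (f 3)) := ianti _ _
lemma s31 : ι ℝ (f 3) * ι ℝ (f 1) = -(ι ℝ (f 1) * ι ℝ (f 3)) := ianti _ _
lemma s32 : ι ℝ (f 3) * ι ℝ (f 2) = -(ι ℝ (f 2) * ι ℝ (f 3)) := ianti _ _
lemma c10 (Z) : ι ℝ (f 1) * (ι ℝ (f 0) * Z) = -(ι ℝ (f 0) * (ι ℝ (f 1) * Z)) := icons _ _ _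
lemma c20 (Z) : ι ℝ (f 2) * (ι ℝ (f 0) * Z) = -(ι ℝ (f 0) * (ι ℝ (f 2) * Z)) := icons _ _ _
lemma c21 (Z) : ι ℝ (f 2) * (ι ℝ (f 1) * Z) = -(ι ℝ (f 1) * (ι ℝ (f 2) * Z)) := icons _ _ _
lemma c30 (Z) : ι ℝ (f 3) * (ι ℝ (f 0) * Z) = -(ι ℝ (f 0) * (ι ℝ (f 3) * Z)) := icons _ _ _
lemma c31 (Z) : ι ℝ (f 3) * (ι ℝ (f 1) * Z) = -(ι ℝ (f 1) * (ι ℝ (f 3) * Z)) := icons _ _ _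
lemma c32 (Z) : ι ℝ (f 3) * (ι ℝ (f 2) * Z) = -(ι ℝ (f 2) * (ι ℝ (f 3) * Z)) := icons _ _ _

lemma five (a b c d e : V4) : ι ℝ a * (ι ℝ b * (ι ℝ c * (ι ℝ d * ι ℝ e))) = 0 := by
  have h5 : (ιMulti ℝ 5 : V4 [⋀^Fin 5]→ₗ[ℝ] ExteriorAlgebra ℝ V4) = 0 := by
    apply Module.Basis.ext_alternating (Pi.basisFun ℝ (Fin 4))
    intro v hv
    have := Fintype.card_le_of_injective v hv
    simp at this
  have h := congrFun (congrArg (fun F => F.toFun) h5) ![a,b,c,d,e]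
  simp [ιMulti_apply, List.ofFn_succ, Matrix.vecTail, Function.comp,
    (by decide : Fin.succ (2 : Fin 3) = 3), (by decide : Fin.succ (2 : Fin 4) = 3),
    (by decide : Fin.succ (3 : Fin 4) = 4)] at h
  exact h

lemma hfb : ∀ i, (Pi.basisFun ℝ (Fin 4)) i = f i := by
  intro i; ext j; simp [f, Pi.basisFun_apply]

section
variable (integ : ExteriorAlgebra ℝ V4 →ₗ[ℝ] ℝ)

/-- bilinear map `(s,t) ↦ integ(f_i ∧ f_j ∧ s ∧ t) • (f_k ∧ f_l)` -/
def TermB (i j k l : Fin 4) : V4 →ₗ[ℝ] V4 →ₗ[ℝ] ExteriorAlgebra ℝ V4 :=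
  LinearMap.mk₂ ℝ
    (fun s t => integ (ι ℝ (f i) * ι ℝ (f j) * ι ℝ s * ι ℝ t) • (ι ℝ (f k) * ι ℝ (f l)))
    (by intros; simp [map_add, mul_add, add_mul, add_smul])
    (by intros; simp [map_smul, mul_smul_comm, smul_mul_assoc, smul_smul])
    (by intros; simp [map_add, mul_add, add_mul, add_smul])
    (by intros; simp [map_smul, mul_smul_comm, smul_mul_assoc, smul_smul])

def WedgeB : V4 →ₗ[ℝ] V4 →ₗ[ℝ] ExteriorAlgebra ℝ V4 :=
  LinearMap.mk₂ ℝ (fun s t => ι ℝ s * ι ℝ t)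
    (by intros; simp [map_add, add_mul])
    (by intros; simp [map_smul, smul_mul_assoc])
    (by intros; simp [map_add, mul_add])
    (by intros; simp [map_smul, mul_smul_comm])
end

section
variable (integ : ExteriorAlgebra ℝ V4 →ₗ[ℝ] ℝ) (hintegω : integ ωA = 1)
include hintegω

lemma C4 (a b c d : V4) :
    ι ℝ a * (ι ℝ b * (ι ℝ c * ι ℝ d))
      = integ (ι ℝ a * (ι ℝ b * (ι ℝ c * ι ℝ d))) • ωA := by
  have key : (ιMulti ℝ 4 : V4 [⋀^Fin 4]→ₗ[ℝ] ExteriorAlgebra ℝ V4)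
      = (integ.smulRight ωA).compAlternatingMap (ιMulti ℝ 4) := by
    apply Module.Basis.ext_alternating (Pi.basisFun ℝ (Fin 4))
    intro v hv
    have hbij : Function.Bijective v := Finite.injective_iff_bijective.mp hv
    let σ : Equiv.Perm (Fin 4) := Equiv.ofBijective v hbij
    have hveq : (fun i => (Pi.basisFun ℝ (Fin 4)) (v i))
        = (fun i => (Pi.basisFun ℝ (Fin 4)) i) ∘ σ := rfl
    have hω : (ιMulti ℝ 4 : V4 [⋀^Fin 4]→ₗ[ℝ] ExteriorAlgebra ℝ V4)
        (fun i => (Pi.basisFun ℝ (Fin 4)) i) = ωA := by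
      simp [ιMulti_apply, List.ofFn_succ, Matrix.vecTail, Function.comp, hfb, ωA, f,
        mul_assoc, (by decide : Fin.succ (2 : Fin 3) = 3)]
    have base : (ιMulti ℝ 4 : V4 [⋀^Fin 4]→ₗ[ℝ] ExteriorAlgebra ℝ V4)
          (fun i => (Pi.basisFun ℝ (Fin 4)) i)
        = ((integ.smulRight ωA).compAlternatingMap (ιMulti ℝ 4))
          (fun i => (Pi.basisFun ℝ (Fin 4)) i) := by
      simp only [LinearMap.compAlternatingMap_apply, LinearMap.smulRight_apply, hω, hintegω,
        one_smul]
    rw [hveq, AlternatingMap.map_perm, AlternatingMap.map_perm, base]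
  have h := congrFun (congrArg (fun F => F.toFun) key) ![a,b,c,d]
  simp [ιMulti_apply, List.ofFn_succ, Matrix.vecTail, Function.comp,
    (by decide : Fin.succ (2 : Fin 3) = 3)] at h
  exact h

set_option maxHeartbeats 1000000 in
lemma COmap : WedgeB = TermB integ 0 1 2 3 - TermB integ 0 2 1 3 + TermB integ 0 3 1 2
    + TermB integ 1 2 0 3 - TermB integ 1 3 0 2 + TermB integ 2 3 0 1 := by
  have hω' : integ (ι ℝ (f 0) * (ι ℝ (f 1) * (ι ℝ (f 2) * ι ℝ (f 3)))) = 1 := by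
    rw [← hintegω]; congr 1; rw [ωA]; simp only [mul_assoc]
  apply LinearMap.ext_basis (Pi.basisFun ℝ (Fin 4)) (Pi.basisFun ℝ (Fin 4))
  intro p q
  fin_cases p <;> fin_cases q <;>
    (simp only [hfb, TermB, WedgeB, LinearMap.mk₂_apply, LinearMap.add_apply,
      LinearMap.sub_apply, Fin.isValue, Fin.zero_eta, Fin.mk_one, Fin.reduceFinMk]
     simp only [mul_assoc, s10, s20, s21, s30, s31, s32,
      c10, c20, c21, c30, c31, c32, isq, ι_sq_zero, mul_neg, neg_mul, neg_neg,
      mul_zero, zero_mul, map_neg, map_zero, hω', one_smul, zero_smul, smul_zero,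
      neg_smul, smul_neg, add_zero, zero_add, sub_zero, zero_sub, neg_zero, sub_self])

lemma CO (s t : V4) : ι ℝ s * ι ℝ t
    = integ (ι ℝ (f 0) * ι ℝ (f 1) * ι ℝ s * ι ℝ t) • (ι ℝ (f 2) * ι ℝ (f 3))
    - integ (ι ℝ (f 0) * ι ℝ (f 2) * ι ℝ s * ι ℝ t) • (ι ℝ (f 1) * ι ℝ (f 3))
    + integ (ι ℝ (f 0) * ι ℝ (f 3) * ι ℝ s * ι ℝ t) • (ι ℝ (f 1) * ι ℝ (f 2))
    + integ (ι ℝ (f 1) * ι ℝ (f 2) * ι ℝ s * ι ℝ t) • (ι ℝ (f 0) * ι ℝ (f 3))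
    - integ (ι ℝ (f 1) * ι ℝ (f 3) * ι ℝ s * ι ℝ t) • (ι ℝ (f 0) * ι ℝ (f 2))
    + integ (ι ℝ (f 2) * ι ℝ (f 3) * ι ℝ s * ι ℝ t) • (ι ℝ (f 0) * ι ℝ (f 1)) := by
  have h : WedgeB s t = (TermB integ 0 1 2 3 - TermB integ 0 2 1 3 + TermB integ 0 3 1 2
      + TermB integ 1 2 0 3 - TermB integ 1 3 0 2 + TermB integ 2 3 0 1) s t := by
    rw [COmap integ hintegω]
  simpa [WedgeB, TermB, sub_eq_add_neg] using h
end

-- ## double exterior algebra lemmas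

lemma swAB (x y : V4) : pull₂ (ι ℝ x) * pull₁ (ι ℝ y) = -(pull₁ (ι ℝ y) * pull₂ (ι ℝ x)) := by
  simp only [pull₁, pull₂, ExteriorAlgebra.map_apply_ι]
  exact ianti _ _

lemma swAB' (x y : V4) (Z) :
    pull₂ (ι ℝ x) * (pull₁ (ι ℝ y) * Z) = -(pull₁ (ι ℝ y) * (pull₂ (ι ℝ x) * Z)) := by
  rw [← mul_assoc, swAB, neg_mul, mul_assoc]

lemma colA (x y : ExteriorAlgebra ℝ V4) (Z) : pull₁ x * (pull₁ y * Z) = pull₁ (x * y) * Z := by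
  rw [← mul_assoc, ← map_mul]

lemma colA2 (x y : ExteriorAlgebra ℝ V4) : pull₁ x * pull₁ y = pull₁ (x * y) :=
  (map_mul _ _ _).symm

lemma colB (x y : ExteriorAlgebra ℝ V4) (Z) : pull₂ x * (pull₂ y * Z) = pull₂ (x * y) * Z := by
  rw [← mul_assoc, ← map_mul]

lemma colB2 (x y : ExteriorAlgebra ℝ V4) : pull₂ x * pull₂ y = pull₂ (x * y) :=
  (map_mul _ _ _).symm

lemma mP (c : ℤ) (v : V4) : mPull c (ι ℝ v) = pull₁ (ι ℝ v) + (c : ℝ) • pull₂ (ι ℝ v) := by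
  rw [mPull, ExteriorAlgebra.map_apply_ι, LinearMap.add_apply, LinearMap.smul_apply,
    map_add, map_smul, pull₁, pull₂, ExteriorAlgebra.map_apply_ι,
    ExteriorAlgebra.map_apply_ι]

section
variable (integ : ExteriorAlgebra ℝ V4 →ₗ[ℝ] ℝ) (hintegω : integ ωA = 1)
variable (push : ExteriorAlgebra ℝ (V4 × V4) →ₗ[ℝ] ExteriorAlgebra ℝ V4)
variable (hpushω : ∀ β : ExteriorAlgebra ℝ V4, push (pull₁ ωA * pull₂ β) = β)
variable (hpushlow : ∀ k : ℕ, k < 4 → ∀ γ ∈ ⋀[ℝ]^k V4,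
      ∀ β : ExteriorAlgebra ℝ V4, push (pull₁ γ * pull₂ β) = 0)

include hintegω hpushω in
lemma PUSH4 (a b c d : V4) (β : ExteriorAlgebra ℝ V4) :
    push (pull₁ (ι ℝ a * (ι ℝ b * (ι ℝ c * ι ℝ d))) * pull₂ β)
      = integ (ι ℝ a * (ι ℝ b * (ι ℝ c * ι ℝ d))) • β := by
  conv_lhs => rw [C4 integ hintegω a b c d]
  rw [map_smul, smul_mul_assoc, map_smul, hpushω]

include hpushlow in
lemma PUSH2 (a b : V4) (β : ExteriorAlgebra ℝ V4) :
    push (pull₁ (ι ℝ a * ι ℝ b) * pull₂ β) = 0 := by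
  refine hpushlow 2 (by norm_num) _ ?_ β
  show _ ∈ LinearMap.range (ι ℝ : V4 →ₗ[ℝ] ExteriorAlgebra ℝ V4) ^ 2
  rw [pow_two]
  exact Submodule.mul_mem_mul (LinearMap.mem_range_self _ a) (LinearMap.mem_range_self _ b)

include hpushlow in
lemma PUSH3 (a b c : V4) (β : ExteriorAlgebra ℝ V4) :
    push (pull₁ (ι ℝ a * (ι ℝ b * ι ℝ c)) * pull₂ β) = 0 := by
  refine hpushlow 3 (by norm_num) _ ?_ β
  show _ ∈ LinearMap.range (ι ℝ : V4 →ₗ[ℝ] ExteriorAlgebra ℝ V4) ^ 3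
  rw [show (3:ℕ) = 1 + 2 from rfl, pow_add, pow_one, pow_two]
  exact Submodule.mul_mem_mul (LinearMap.mem_range_self _ a)
    (Submodule.mul_mem_mul (LinearMap.mem_range_self _ b) (LinearMap.mem_range_self _ c))

set_option maxHeartbeats 2000000 in
include hintegω hpushω hpushlow in
lemma CORE (c₁ c₂ c₃ c₄ : ℝ) (u v w z s t : V4) :
    push ((pull₁ (ι ℝ u) + c₁ • pull₂ (ι ℝ u)) * (pull₁ (ι ℝ v) + c₂ • pull₂ (ι ℝ v)) *
        ((pull₁ (ι ℝ w) + c₃ • pull₂ (ι ℝ w)) * (pull₁ (ι ℝ z) + c₄ • pull₂ (ι ℝ z))) *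
        (pull₁ (ι ℝ s) * pull₁ (ι ℝ t)))
    = (c₃ * c₄ * integ (ι ℝ u * (ι ℝ v * (ι ℝ s * ι ℝ t)))) • (ι ℝ w * ι ℝ z)
    + (c₁ * c₂ * integ (ι ℝ w * (ι ℝ z * (ι ℝ s * ι ℝ t)))) • (ι ℝ u * ι ℝ v)
    + (c₂ * c₃ * integ (ι ℝ u * (ι ℝ z * (ι ℝ s * ι ℝ t)))) • (ι ℝ v * ι ℝ w)
    + (c₁ * c₄ * integ (ι ℝ v * (ι ℝ w * (ι ℝ s * ι ℝ t)))) • (ι ℝ u * ι ℝ z)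
    - (c₂ * c₄ * integ (ι ℝ u * (ι ℝ w * (ι ℝ s * ι ℝ t)))) • (ι ℝ v * ι ℝ z)
    - (c₁ * c₃ * integ (ι ℝ v * (ι ℝ z * (ι ℝ s * ι ℝ t)))) • (ι ℝ u * ι ℝ w) := by
  simp only [add_mul, mul_add, smul_mul_assoc, mul_smul_comm, map_add, map_smul]
  simp only [mul_assoc]
  simp only [swAB', swAB, mul_neg, neg_mul, neg_neg, map_neg, smul_neg, map_smul]
  simp only [colA, colA2, colB, colB2]
  simp only [five, zero_mul, mul_zero, map_zero, smul_zero,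
    PUSH4 integ hintegω push hpushω, PUSH2 push hpushlow, PUSH3 push hpushlow,
    add_zero, zero_add, smul_smul]
  module
end


lemma comm22 (a b c d : V4) :
    ι ℝ c * (ι ℝ d * (ι ℝ a * ι ℝ b)) = ι ℝ a * (ι ℝ b * (ι ℝ c * ι ℝ d)) := by
  simp only [icons d a, icons c a, icons c b, ianti d b, mul_neg, neg_neg]

lemma SWW (a b c d : V4) :
    (ι ℝ a * ι ℝ b) * (ι ℝ c * ι ℝ d) = ι ℝ c * (ι ℝ d * (ι ℝ a * ι ℝ b)) := by
  rw [mul_assoc]; exact comm22 c d a b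

section
variable (integ : ExteriorAlgebra ℝ V4 →ₗ[ℝ] ℝ) (hintegω : integ ωA = 1)
variable (push : ExteriorAlgebra ℝ (V4 × V4) →ₗ[ℝ] ExteriorAlgebra ℝ V4)
variable (hpushω : ∀ β : ExteriorAlgebra ℝ V4, push (pull₁ ωA * pull₂ β) = β)
variable (hpushlow : ∀ k : ℕ, k < 4 → ∀ γ ∈ ⋀[ℝ]^k V4,
      ∀ β : ExteriorAlgebra ℝ V4, push (pull₁ γ * pull₂ β) = 0)

lemma ISW (a b c d : V4) :
    integ (ι ℝ b * (ι ℝ a * (ι ℝ c * ι ℝ d))) = -integ (ι ℝ a * (ι ℝ b * (ι ℝ c * ι ℝ d))) := by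
  rw [icons b a, map_neg]

include hintegω hpushω hpushlow in
lemma OMPUSH (s t : V4) : push (mPull 1 ωA * pull₁ (ι ℝ s * ι ℝ t)) = ι ℝ s * ι ℝ t := by
  rw [show ωA = ι ℝ (f 0) * ι ℝ (f 1) * ι ℝ (f 2) * ι ℝ (f 3) from rfl]
  rw [map_mul (mPull 1), map_mul (mPull 1), map_mul (mPull 1),
    mul_assoc (mPull 1 (ι ℝ (f 0)) * mPull 1 (ι ℝ (f 1))), map_mul pull₁]
  simp only [mP]
  rw [CORE integ hintegω push hpushω hpushlow]
  have hco := CO integ hintegω s t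
  simp only [mul_assoc] at hco
  simp only [Int.cast_one, one_mul]
  conv_rhs => rw [hco]
  module

set_option maxHeartbeats 2000000 in
include hintegω hpushω hpushlow in
lemma PL (u v w z s t : V4) :
    integ (ι ℝ u * (ι ℝ v * (ι ℝ s * ι ℝ t))) • (ι ℝ w * ι ℝ z)
    + integ (ι ℝ w * (ι ℝ z * (ι ℝ s * ι ℝ t))) • (ι ℝ u * ι ℝ v)
    + integ (ι ℝ u * (ι ℝ z * (ι ℝ s * ι ℝ t))) • (ι ℝ v * ι ℝ w)
    + integ (ι ℝ v * (ι ℝ w * (ι ℝ s * ι ℝ t))) • (ι ℝ u * ι ℝ z)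
    - integ (ι ℝ u * (ι ℝ w * (ι ℝ s * ι ℝ t))) • (ι ℝ v * ι ℝ z)
    - integ (ι ℝ v * (ι ℝ z * (ι ℝ s * ι ℝ t))) • (ι ℝ u * ι ℝ w)
    = integ (ι ℝ u * (ι ℝ v * (ι ℝ w * ι ℝ z))) • (ι ℝ s * ι ℝ t) := by
  have h2 : push (mPull 1 (ι ℝ u * (ι ℝ v * (ι ℝ w * ι ℝ z))) * pull₁ (ι ℝ s * ι ℝ t))
      = integ (ι ℝ u * (ι ℝ v * (ι ℝ w * ι ℝ z))) • (ι ℝ s * ι ℝ t) := by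
    conv_lhs => rw [C4 integ hintegω u v w z]
    rw [map_smul, smul_mul_assoc, map_smul,
      OMPUSH integ hintegω push hpushω hpushlow s t]
  have h1 : push (mPull 1 (ι ℝ u * (ι ℝ v * (ι ℝ w * ι ℝ z))) * pull₁ (ι ℝ s * ι ℝ t))
      = (((1:ℤ):ℝ) * ((1:ℤ):ℝ) * integ (ι ℝ u * (ι ℝ v * (ι ℝ s * ι ℝ t)))) • (ι ℝ w * ι ℝ z)
      + (((1:ℤ):ℝ) * ((1:ℤ):ℝ) * integ (ι ℝ w * (ι ℝ z * (ι ℝ s * ι ℝ t)))) • (ι ℝ u * ι ℝ v)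
      + (((1:ℤ):ℝ) * ((1:ℤ):ℝ) * integ (ι ℝ u * (ι ℝ z * (ι ℝ s * ι ℝ t)))) • (ι ℝ v * ι ℝ w)
      + (((1:ℤ):ℝ) * ((1:ℤ):ℝ) * integ (ι ℝ v * (ι ℝ w * (ι ℝ s * ι ℝ t)))) • (ι ℝ u * ι ℝ z)
      - (((1:ℤ):ℝ) * ((1:ℤ):ℝ) * integ (ι ℝ u * (ι ℝ w * (ι ℝ s * ι ℝ t)))) • (ι ℝ v * ι ℝ z)
      - (((1:ℤ):ℝ) * ((1:ℤ):ℝ) * integ (ι ℝ v * (ι ℝ z * (ι ℝ s * ι ℝ t)))) • (ι ℝ u * ι ℝ w) := by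
    conv_lhs => rw [map_mul (mPull 1), map_mul (mPull 1), map_mul (mPull 1),
      ← mul_assoc (mPull 1 (ι ℝ u)), map_mul pull₁]
    simp only [mP]
    rw [CORE integ hintegω push hpushω hpushlow]
  rw [h1] at h2
  linear_combination (norm := module) h2
end

set_option maxHeartbeats 4000000 in
/-- `p₂!( m_r*λ ∧ m*λ ∧ p₁*α ) = (r−1)²·(∫_A αλ)·λ + r·(∫_A λ²)·α`
for all 2-forms `λ, α ∈ Λ²V*`. -/
theorem stmt0 (r : ℤ)
    -- `∫_A : Λ•V* → ℝ`, the coordinate with respect to `ω`: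
    (integ : ExteriorAlgebra ℝ V4 →ₗ[ℝ] ℝ)
    (hintegω : integ ωA = 1)
    (hinteglow : ∀ k : ℕ, k < 4 → ∀ γ ∈ ⋀[ℝ]^k V4, integ γ = 0)
    -- `p₂! : Λ•(V₁*⊕V₂*) → Λ•V*`, integration over the first factor:
    (push : ExteriorAlgebra ℝ (V4 × V4) →ₗ[ℝ] ExteriorAlgebra ℝ V4)
    (hpushω : ∀ β : ExteriorAlgebra ℝ V4, push (pull₁ ωA * pull₂ β) = β)
    (hpushlow : ∀ k : ℕ, k < 4 → ∀ γ ∈ ⋀[ℝ]^k V4,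
      ∀ β : ExteriorAlgebra ℝ V4, push (pull₁ γ * pull₂ β) = 0)
    -- the 2-forms `λ` and `α`:
    (lam : ExteriorAlgebra ℝ V4) (hlam : lam ∈ ⋀[ℝ]^2 V4)
    (alp : ExteriorAlgebra ℝ V4) (halp : alp ∈ ⋀[ℝ]^2 V4) :
    push (mPull r lam * mPull 1 lam * pull₁ alp) =
      (((r : ℝ) - 1) ^ 2 * integ (alp * lam)) • lam +
        ((r : ℝ) * integ (lam * lam)) • alp := by
  have Sym : ∀ x ∈ LinearMap.range (ι ℝ : V4 →ₗ[ℝ] ExteriorAlgebra ℝ V4)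
        * LinearMap.range (ι ℝ : V4 →ₗ[ℝ] ExteriorAlgebra ℝ V4),
      ∀ y ∈ LinearMap.range (ι ℝ : V4 →ₗ[ℝ] ExteriorAlgebra ℝ V4)
        * LinearMap.range (ι ℝ : V4 →ₗ[ℝ] ExteriorAlgebra ℝ V4),
      ∀ a ∈ LinearMap.range (ι ℝ : V4 →ₗ[ℝ] ExteriorAlgebra ℝ V4)
        * LinearMap.range (ι ℝ : V4 →ₗ[ℝ] ExteriorAlgebra ℝ V4),
      push (mPull r x * mPull 1 y * pull₁ a) + push (mPull r y * mPull 1 x * pull₁ a)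
        = (((r : ℝ) - 1) ^ 2 * integ (a * y)) • x + (((r : ℝ) - 1) ^ 2 * integ (a * x)) • y
          + ((r : ℝ) * (integ (x * y) + integ (y * x))) • a := by
    intro x hx
    refine Submodule.mul_induction_on hx ?_ ?_
    · rintro m ⟨u, rfl⟩ n ⟨v, rfl⟩ y hy
      refine Submodule.mul_induction_on hy ?_ ?_
      · rintro m' ⟨w, rfl⟩ n' ⟨z, rfl⟩ a ha
        refine Submodule.mul_induction_on ha ?_ ?_
        · rintro p ⟨s, rfl⟩ q ⟨t, rfl⟩
          simp only [map_mul, mP]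
          rw [CORE integ hintegω push hpushω hpushlow,
            CORE integ hintegω push hpushω hpushlow]
          simp only [Int.cast_one, one_mul, mul_one]
          rw [ISW integ v w s t, ISW integ u z s t, ISW integ u w s t, ISW integ v z s t]
          rw [ianti z u, ianti w v, ianti z v, ianti w u]
          rw [show (ι ℝ s * ι ℝ t) * (ι ℝ w * ι ℝ z)
              = ι ℝ w * (ι ℝ z * (ι ℝ s * ι ℝ t)) from SWW s t w z]
          rw [show (ι ℝ s * ι ℝ t) * (ι ℝ u * ι ℝ v)
              = ι ℝ u * (ι ℝ v * (ι ℝ s * ι ℝ t)) from SWW s t u v]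
          rw [show (ι ℝ w * ι ℝ z) * (ι ℝ u * ι ℝ v)
              = ι ℝ u * (ι ℝ v * (ι ℝ w * ι ℝ z)) from SWW w z u v]
          rw [show (ι ℝ u * ι ℝ v) * (ι ℝ w * ι ℝ z)
              = ι ℝ u * (ι ℝ v * (ι ℝ w * ι ℝ z)) from mul_assoc _ _ _]
          linear_combination (norm := module)
            ((2:ℝ) * (r:ℝ)) • PL integ hintegω push hpushω hpushlow u v w z s t
        · intro a₁ a₂ h₁ h₂
          simp only [map_add, mul_add, add_mul]
          linear_combination (norm := module) h₁ + h₂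
      · intro y₁ y₂ h₁ h₂ a ha
        simp only [map_add, mul_add, add_mul]
        linear_combination (norm := module) h₁ a ha + h₂ a ha
    · intro x₁ x₂ h₁ h₂ y hy a ha
      simp only [map_add, mul_add, add_mul]
      linear_combination (norm := module) h₁ y hy a ha + h₂ y hy a ha
  have hlam' : lam ∈ LinearMap.range (ι ℝ : V4 →ₗ[ℝ] ExteriorAlgebra ℝ V4)
      * LinearMap.range (ι ℝ : V4 →ₗ[ℝ] ExteriorAlgebra ℝ V4) := by
    rw [← pow_two]; exact hlam
  have halp' : alp ∈ LinearMap.range (ι ℝ : V4 →ₗ[ℝ] ExteriorAlgebra ℝ V4)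
      * LinearMap.range (ι ℝ : V4 →ₗ[ℝ] ExteriorAlgebra ℝ V4) := by
    rw [← pow_two]; exact halp
  have h := Sym lam hlam' lam hlam' alp halp'
  linear_combination (norm := module) ((2:ℝ)⁻¹) • h
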